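/- arXiv:1703.04465 — 4 statements merged into one kernel-verified Lean document; each statement's English description precedes it below -/
import Mathlib

section
/- Let (λ_k)_{k∈ℕ} be a sequence of positive real numbers with ∑_{k∈ℕ} 1/λ_k < ∞, and let ν > 0. Then lim_{τ→∞} ∏_{k∈ℕ} (1 − e^{−λ_k/τ})/(1 − e^{−(λ_k+ν)/τ}) = ∏_{k∈ℕ} λ_k/(λ_k + ν), where both infinite products converge (to positive real numbers) for every τ > 0. -/
open Real Filter

private lemma hasProd_of_summable_log {f : ℕ → ℝ} (hf : ∀ k, 0 < f k)
    (h : Summable fun k => Real.log (f k)) :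
    HasProd f (Real.exp (∑' k, Real.log (f k))) := by
  have := h.hasSum.rexp
  have hfe : (rexp ∘ fun k => Real.log (f k)) = f := funext fun k => Real.exp_log (hf k)
  rwa [hfe] at this

private lemma aux_tendsto (c : ℝ) (hc : 0 < c) :
    Tendsto (fun τ : ℝ => (1 - Real.exp (-c / τ)) / (c / τ)) atTop (nhds 1) := by
  have hd := Real.hasDerivAt_exp 0
  rw [hasDerivAt_iff_tendsto_slope] at hd
  have h2 : Tendsto (fun τ : ℝ => -c / τ) atTop (nhdsWithin (0:ℝ) {(0:ℝ)}ᶜ) := by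
    rw [tendsto_nhdsWithin_iff]
    constructor
    · simpa using (tendsto_const_nhds (x := -c)).div_atTop tendsto_id
    · filter_upwards [eventually_gt_atTop (0:ℝ)] with τ hτ
      simp only [Set.mem_compl_iff, Set.mem_singleton_iff]
      exact div_ne_zero (neg_ne_zero.mpr hc.ne') hτ.ne'
  have h3 := hd.comp h2
  simp only [Real.exp_zero] at h3
  refine h3.congr fun τ => ?_
  simp only [Function.comp, slope_def_field, Real.exp_zero, sub_zero]
  ring

private lemma key_bounds {x ν τ : ℝ} (hx : 0 < x) (hν : 0 < ν) (hτ : 0 < τ) :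
    x / (x + ν) ≤ (1 - Real.exp (-x / τ)) / (1 - Real.exp (-(x + ν) / τ)) ∧
      (1 - Real.exp (-x / τ)) / (1 - Real.exp (-(x + ν) / τ)) < 1 := by
  have hN : 0 < 1 - Real.exp (-x / τ) := by
    have : Real.exp (-x / τ) < 1 := Real.exp_lt_one_iff.mpr (div_neg_of_neg_of_pos (by linarith) hτ)
    linarith
  have hD : 0 < 1 - Real.exp (-(x + ν) / τ) := by
    have : Real.exp (-(x + ν) / τ) < 1 :=
      Real.exp_lt_one_iff.mpr (div_neg_of_neg_of_pos (by linarith) hτ)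
    linarith
  constructor
  · rw [div_le_div_iff₀ (by positivity) hD]
    have hsplit : Real.exp (-(x + ν) / τ) = Real.exp (-x / τ) * Real.exp (-(ν / τ)) := by
      rw [← Real.exp_add]; ring_nf
    have h1 : x / τ + 1 ≤ Real.exp (x / τ) := Real.add_one_le_exp _
    have h2 : Real.exp (-x / τ) * Real.exp (x / τ) = 1 := by
      rw [← Real.exp_add]; simp [neg_div]
    have h3 : (0:ℝ) < Real.exp (-x / τ) := Real.exp_pos _
    have h6 : (x / τ) * Real.exp (-x / τ) ≤ 1 - Real.exp (-x / τ) := by nlinarith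
    have h7 : 1 - Real.exp (-(ν / τ)) ≤ ν / τ := by
      have := Real.add_one_le_exp (-(ν / τ)); linarith
    have h8 : x * (Real.exp (-x / τ) * (1 - Real.exp (-(ν / τ))))
        ≤ x * (Real.exp (-x / τ) * (ν / τ)) := by
      apply mul_le_mul_of_nonneg_left _ hx.le
      exact mul_le_mul_of_nonneg_left h7 h3.le
    have h9 : x * (Real.exp (-x / τ) * (ν / τ)) = ν * ((x / τ) * Real.exp (-x / τ)) := by
      ring
    have h10 : ν * ((x / τ) * Real.exp (-x / τ)) ≤ ν * (1 - Real.exp (-x / τ)) :=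
      mul_le_mul_of_nonneg_left h6 hν.le
    rw [hsplit]
    nlinarith
  · rw [div_lt_one hD]
    have : Real.exp (-(x + ν) / τ) < Real.exp (-x / τ) := by
      apply Real.exp_lt_exp.mpr
      rw [div_lt_div_iff₀ hτ hτ]
      nlinarith
    linarith

/-- Let `(λ k)` be positive reals with `∑ 1/λ k < ∞` and let `ν > 0`. Then the infinite
products `∏ₖ (1 - e^{-λₖ/τ})/(1 - e^{-(λₖ+ν)/τ})` (for every `τ > 0`) and
`∏ₖ λₖ/(λₖ+ν)` converge to positive real numbers, and the former tends to the latter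
as `τ → ∞`. -/
theorem tendsto_prod_ratio_exp (lam : ℕ → ℝ) (hpos : ∀ k, 0 < lam k)
    (hsum : Summable fun k => 1 / lam k) (ν : ℝ) (hν : 0 < ν) :
    (∀ τ : ℝ, 0 < τ → Multipliable fun k =>
      (1 - Real.exp (-lam k / τ)) / (1 - Real.exp (-(lam k + ν) / τ))) ∧
    (Multipliable fun k => lam k / (lam k + ν)) ∧
    (∀ τ : ℝ, 0 < τ →
      0 < ∏' k, (1 - Real.exp (-lam k / τ)) / (1 - Real.exp (-(lam k + ν) / τ))) ∧
    (0 < ∏' k, lam k / (lam k + ν)) ∧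
    Filter.Tendsto
      (fun τ : ℝ => ∏' k, (1 - Real.exp (-lam k / τ)) / (1 - Real.exp (-(lam k + ν) / τ)))
      Filter.atTop (nhds (∏' k, lam k / (lam k + ν))) := by
  set F : ℝ → ℕ → ℝ :=
    fun τ k => (1 - Real.exp (-lam k / τ)) / (1 - Real.exp (-(lam k + ν) / τ)) with hF
  set g : ℕ → ℝ := fun k => lam k / (lam k + ν) with hg
  have hgpos : ∀ k, 0 < g k := fun k => div_pos (hpos k) (by linarith [hpos k])
  have hgle1 : ∀ k, g k ≤ 1 := fun k =>
    (div_le_one (by linarith [hpos k])).mpr (by linarith)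
  have hb : Summable fun k => ν / lam k := by
    simpa only [mul_one_div] using hsum.mul_left ν
  -- bound on |log| of anything between g k and 1
  have habslog : ∀ (k : ℕ) (x : ℝ), g k ≤ x → x ≤ 1 → |Real.log x| ≤ ν / lam k := by
    intro k x h1 h2
    have hx : 0 < x := lt_of_lt_of_le (hgpos k) h1
    rw [abs_of_nonpos (Real.log_nonpos hx.le h2)]
    have hmono : Real.log (g k) ≤ Real.log x := Real.log_le_log (hgpos k) h1
    have : -Real.log (g k) ≤ ν / lam k := by
      rw [← Real.log_inv]
      have hinv : (g k)⁻¹ = 1 + ν / lam k := by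
        rw [hg, inv_div, add_div, div_self (hpos k).ne']
      rw [hinv]
      have := Real.log_le_sub_one_of_pos (x := 1 + ν / lam k) (by have := hpos k; positivity)
      linarith
    linarith
  -- bounds on F
  have hFb : ∀ τ : ℝ, 0 < τ → ∀ k, g k ≤ F τ k ∧ F τ k < 1 :=
    fun τ hτ k => key_bounds (hpos k) hν hτ
  have hsumlogg : Summable fun k => Real.log (g k) := by
    apply Summable.of_abs
    exact Summable.of_nonneg_of_le (fun k => abs_nonneg _)
      (fun k => habslog k (g k) le_rfl (hgle1 k)) hb
  have hsumlogF : ∀ τ : ℝ, 0 < τ → Summable fun k => Real.log (F τ k) := by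
    intro τ hτ
    apply Summable.of_abs
    exact Summable.of_nonneg_of_le (fun k => abs_nonneg _)
      (fun k => habslog k (F τ k) (hFb τ hτ k).1 (hFb τ hτ k).2.le) hb
  have hprodg : HasProd g (Real.exp (∑' k, Real.log (g k))) :=
    hasProd_of_summable_log hgpos hsumlogg
  have hprodF : ∀ τ : ℝ, 0 < τ → HasProd (F τ) (Real.exp (∑' k, Real.log (F τ k))) :=
    fun τ hτ => hasProd_of_summable_log
      (fun k => lt_of_lt_of_le (hgpos k) (hFb τ hτ k).1) (hsumlogF τ hτ)
  refine ⟨fun τ hτ => (hprodF τ hτ).multipliable, hprodg.multipliable,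
    fun τ hτ => ?_, ?_, ?_⟩
  · rw [(hprodF τ hτ).tprod_eq]; exact Real.exp_pos _
  · rw [hprodg.tprod_eq]; exact Real.exp_pos _
  -- the limit
  · -- pointwise convergence of log (F τ k)
    have hk : ∀ k, Tendsto (fun τ => F τ k) atTop (nhds (g k)) := by
      intro k
      have A := aux_tendsto (lam k) (hpos k)
      have B := aux_tendsto (lam k + ν) (by linarith [hpos k])
      have C := (A.div B one_ne_zero).mul_const (lam k / (lam k + ν))
      rw [show (1:ℝ) / 1 * (lam k / (lam k + ν)) = g k by rw [hg]; ring] at C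
      refine C.congr' ?_
      filter_upwards [eventually_gt_atTop (0:ℝ)] with τ hτ
      have hD : 0 < 1 - Real.exp (-(lam k + ν) / τ) := by
        have : Real.exp (-(lam k + ν) / τ) < 1 :=
          Real.exp_lt_one_iff.mpr (div_neg_of_neg_of_pos (by linarith [hpos k]) hτ)
        linarith
      have h1 : lam k ≠ 0 := (hpos k).ne'
      have h2 : lam k + ν ≠ 0 := by have := hpos k; positivity
      have hlm : lam k / τ / ((lam k + ν) / τ) = lam k / (lam k + ν) := by
        rw [div_div_div_comm, div_self hτ.ne', div_one]
      simp only [Pi.div_apply, hF]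
      rw [div_div_div_comm, hlm, div_mul_cancel₀]
      exact div_ne_zero h1 h2
    have hlogk : ∀ k, Tendsto (fun τ => Real.log (F τ k)) atTop (nhds (Real.log (g k))) :=
      fun k => ((Real.continuousAt_log (hgpos k).ne').tendsto).comp (hk k)
    have hdom : Tendsto (fun τ => ∑' k, Real.log (F τ k)) atTop
        (nhds (∑' k, Real.log (g k))) := by
      apply tendsto_tsum_of_dominated_convergence hb hlogk
      filter_upwards [eventually_gt_atTop (0:ℝ)] with τ hτ k
      rw [Real.norm_eq_abs]
      exact habslog k (F τ k) (hFb τ hτ k).1 (hFb τ hτ k).2.le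
    have hT : Tendsto (fun τ => Real.exp (∑' k, Real.log (F τ k))) atTop
        (nhds (Real.exp (∑' k, Real.log (g k)))) :=
      (Real.continuous_exp.tendsto _).comp hdom
    rw [hprodg.tprod_eq]
    refine hT.congr' ?_
    filter_upwards [eventually_gt_atTop (0:ℝ)] with τ hτ
    exact ((hprodF τ hτ).tprod_eq).symm
end

section
/- There exists a constant C > 0 such that for all λ > 0, ν > 0 and τ > 0, |(1 − e^{−λ/τ})/(1 − e^{−(λ+ν)/τ}) − 1| ≤ C ν/λ. -/
/-- There is a constant `C > 0` such that for all `λ, ν, τ > 0`,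
`|(1 - e^{-λ/τ})/(1 - e^{-(λ+ν)/τ}) - 1| ≤ C ν / λ`. -/
theorem abs_ratio_exp_sub_one_le : ∃ C : ℝ, 0 < C ∧
    ∀ lam ν τ : ℝ, 0 < lam → 0 < ν → 0 < τ →
      |(1 - Real.exp (-lam / τ)) / (1 - Real.exp (-(lam + ν) / τ)) - 1| ≤ C * ν / lam := by
  refine ⟨1, one_pos, fun lam ν τ hl hν hτ => ?_⟩
  set a := lam / τ with ha
  set b := ν / τ with hb
  have ha0 : 0 < a := div_pos hl hτ
  have hb0 : 0 < b := div_pos hν hτ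
  have e1 : -lam / τ = -a := by rw [ha, neg_div]
  have e2 : -(lam + ν) / τ = -a - b := by rw [ha, hb]; ring
  rw [e1, e2]
  set E1 := Real.exp (-a) with hE1def
  set E2 := Real.exp (-a - b) with hE2def
  have hE1lt : E1 < 1 := Real.exp_lt_one_iff.2 (by linarith)
  have hE2lt : E2 < E1 := Real.exp_lt_exp.2 (by linarith)
  have hE2pos : 0 < E2 := Real.exp_pos _
  have hE1pos : 0 < E1 := Real.exp_pos _
  have h1 : (0:ℝ) < 1 - E1 := by linarith
  have h2 : (0:ℝ) < 1 - E2 := by linarith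
  have hRle : (1 - E1) / (1 - E2) ≤ 1 := by
    rw [div_le_one h2]; linarith
  rw [abs_of_nonpos (by linarith)]
  have heq : -((1 - E1) / (1 - E2) - 1) = (E1 - E2) / (1 - E2) := by
    field_simp
    ring
  rw [heq]
  have step1 : (E1 - E2) / (1 - E2) ≤ (E1 - E2) / (1 - E1) := by
    gcongr <;> linarith
  have hE2eq : E2 = E1 * Real.exp (-b) := by
    rw [hE1def, hE2def, ← Real.exp_add]; ring_nf
  have hexpb : 1 - b ≤ Real.exp (-b) := by
    have := Real.add_one_le_exp (-b); linarith
  have hinv : E1 * Real.exp a = 1 := by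
    rw [hE1def, ← Real.exp_add]; simp
  have hexpa : 1 + a ≤ Real.exp a := by
    have := Real.add_one_le_exp a; linarith
  have hba : b * lam = a * ν := by
    rw [ha, hb]; field_simp
  have step2 : (E1 - E2) / (1 - E1) ≤ 1 * ν / lam := by
    rw [one_mul, div_le_div_iff₀ h1 hl]
    have key : E1 * (1 + a) ≤ 1 := by
      calc E1 * (1 + a) ≤ E1 * Real.exp a := by nlinarith
        _ = 1 := hinv
    have hmono : E1 - E2 ≤ E1 * b := by
      nlinarith [mul_le_mul_of_nonneg_left
        (show 1 - Real.exp (-b) ≤ b from by linarith) hE1pos.le, hE2eq]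
    have h3 : E1 * b * lam = E1 * a * ν := by rw [mul_assoc, hba, mul_assoc]
    have h4 : E1 * a * ν ≤ (1 - E1) * ν :=
      mul_le_mul_of_nonneg_right (by nlinarith) hν.le
    have h5 : (E1 - E2) * lam ≤ E1 * b * lam :=
      mul_le_mul_of_nonneg_right hmono hl.le
    nlinarith
  linarith
end

section
/- Let (λ_k)_{k∈ℕ} be positive reals with ∑_{k∈ℕ} 1/λ_k < ∞ and let ν > 0. Let μ = ⊗_{k∈ℕ} μ_k be the product probability measure on ℂ^ℕ, where each μ_k is the standard complex Gaussian measure with density π^{−1} e^{−|z|²} with respect to Lebesgue measure on ℂ. Then the sum 𝒩(ω) = ∑_{k∈ℕ} |ω_k|²/λ_k converges μ-almost surely, and ∫_{ℂ^ℕ} e^{−ν 𝒩(ω)} dμ(ω) = ∏_{k∈ℕ} λ_k/(λ_k + ν), where the integrand is interpreted as 0 on the null set where the sum diverges. -/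
open scoped Classical

open MeasureTheory

/-- The standard complex Gaussian measure on `ℂ`, with density `π⁻¹ e^{-|z|²}` with
respect to Lebesgue measure on `ℂ ≃ ℝ²`. -/
noncomputable def stdComplexGaussian : Measure ℂ :=
  volume.withDensity fun z => ENNReal.ofReal (Real.pi⁻¹ * Real.exp (-‖z‖ ^ 2))

open Filter Topology
open scoped NNReal ENNReal

lemma integrable_cexp {b : ℝ} (hb : 0 < b) :
    Integrable (fun z : ℂ => Real.exp (-b * ‖z‖ ^ 2)) := by
  have h := Complex.volume_preserving_equiv_real_prod.symm
  rw [← h.integrable_comp_emb Complex.measurableEquivRealProd.symm.measurableEmbedding]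
  have heq : ((fun z : ℂ => Real.exp (-b * ‖z‖ ^ 2)) ∘
      Complex.measurableEquivRealProd.symm)
      = fun p : ℝ × ℝ => Real.exp (-b * p.1 ^ 2) * Real.exp (-b * p.2 ^ 2) := by
    ext p
    simp only [Function.comp_apply, Complex.measurableEquivRealProd_symm_apply,
      Complex.sq_norm, Complex.normSq_mk, ← Real.exp_add]
    ring_nf
  rw [heq, Measure.volume_eq_prod ℝ ℝ]
  exact (integrable_exp_neg_mul_sq hb).mul_prod (integrable_exp_neg_mul_sq hb)

lemma integral_cexp {b : ℝ} (hb : 0 < b) :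
    ∫ z : ℂ, Real.exp (-b * ‖z‖ ^ 2) = Real.pi / b := by
  rw [← (Complex.volume_preserving_equiv_real_prod.symm).integral_comp
      Complex.measurableEquivRealProd.symm.measurableEmbedding]
  have heq : ∀ p : ℝ × ℝ,
      Real.exp (-b * ‖Complex.measurableEquivRealProd.symm p‖ ^ 2)
      = Real.exp (-b * p.1 ^ 2) * Real.exp (-b * p.2 ^ 2) := by
    intro p
    simp only [Complex.measurableEquivRealProd_symm_apply, Complex.sq_norm,
      Complex.normSq_mk, ← Real.exp_add]
    ring_nf
  simp_rw [heq]
  rw [Measure.volume_eq_prod ℝ ℝ, integral_prod_mul (fun x : ℝ => Real.exp (-b * x ^ 2)) (fun x : ℝ => Real.exp (-b * x ^ 2)), integral_gaussian b,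
    Real.mul_self_sqrt (by positivity)]

lemma stdGauss_density_meas :
    Measurable fun z : ℂ => (Real.pi⁻¹ * Real.exp (-‖z‖ ^ 2)).toNNReal := by
  apply Measurable.real_toNNReal
  exact (continuous_const.mul ((Real.continuous_exp.comp
    (Continuous.neg (continuous_norm.pow 2))))).measurable

lemma stdGauss_integral {a : ℝ} (ha : 0 ≤ a) :
    ∫ z, Real.exp (-a * ‖z‖ ^ 2) ∂stdComplexGaussian = 1 / (1 + a) := by
  have h1a : 0 < 1 + a := by linarith
  have : stdComplexGaussian = volume.withDensity
      (fun z : ℂ => ((Real.pi⁻¹ * Real.exp (-‖z‖ ^ 2)).toNNReal : ℝ≥0∞)) := rfl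
  rw [this, integral_withDensity_eq_integral_smul stdGauss_density_meas]
  have heq : ∀ z : ℂ, (Real.pi⁻¹ * Real.exp (-‖z‖ ^ 2)).toNNReal •
      Real.exp (-a * ‖z‖ ^ 2)
      = Real.pi⁻¹ * Real.exp (-(1 + a) * ‖z‖ ^ 2) := by
    intro z
    rw [NNReal.smul_def, smul_eq_mul, Real.coe_toNNReal _ (by positivity), mul_assoc,
      ← Real.exp_add]
    ring_nf
  simp_rw [heq]
  rw [integral_const_mul, integral_cexp h1a]
  field_simp

instance : IsProbabilityMeasure stdComplexGaussian := by
  constructor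
  have hmeas : Measurable fun z : ℂ => Real.pi⁻¹ * Real.exp (-‖z‖ ^ 2) :=
    (continuous_const.mul ((Real.continuous_exp.comp
      (Continuous.neg (continuous_norm.pow 2))))).measurable
  rw [stdComplexGaussian, withDensity_apply _ MeasurableSet.univ, Measure.restrict_univ,
    ← ofReal_integral_eq_lintegral_ofReal]
  · rw [integral_const_mul]
    have : ∫ z : ℂ, Real.exp (-‖z‖ ^ 2) = Real.pi := by
      have := integral_cexp (b := 1) one_pos
      simp only [neg_mul, one_mul, div_one] at this
      simpa using this
    rw [this]
    simp [Real.pi_ne_zero]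
  · have := (integrable_cexp (b := 1) one_pos).const_mul Real.pi⁻¹
    simpa using this
  · filter_upwards with z
    positivity

lemma stdGauss_secondMoment_lt_top :
    ∫⁻ z, ENNReal.ofReal (‖z‖ ^ 2) ∂stdComplexGaussian < ⊤ := by
  have hmeas : Measurable fun z : ℂ => ENNReal.ofReal (Real.pi⁻¹ * Real.exp (-‖z‖ ^ 2)) :=
    ((continuous_const.mul ((Real.continuous_exp.comp
      (Continuous.neg (continuous_norm.pow 2))))).measurable).ennreal_ofReal
  have hg : Measurable fun z : ℂ => ENNReal.ofReal (‖z‖ ^ 2) :=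
    ((continuous_norm.pow 2).measurable).ennreal_ofReal
  rw [stdComplexGaussian, lintegral_withDensity_eq_lintegral_mul _ hmeas hg]
  have heq : ∀ z : ℂ, ((fun z : ℂ => ENNReal.ofReal (Real.pi⁻¹ * Real.exp (-‖z‖ ^ 2))) *
      fun z : ℂ => ENNReal.ofReal (‖z‖ ^ 2)) z
      = ENNReal.ofReal (Real.pi⁻¹ * Real.exp (-‖z‖ ^ 2) * ‖z‖ ^ 2) := by
    intro z
    rw [Pi.mul_apply, ← ENNReal.ofReal_mul (by positivity)]
  simp_rw [heq]
  apply Integrable.lintegral_lt_top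
  apply Integrable.mono' (g := fun z : ℂ => 2 * Real.pi⁻¹ * Real.exp (-(1/2 : ℝ) * ‖z‖ ^ 2))
  · exact (integrable_cexp (by norm_num)).const_mul _
  · exact (((continuous_const.mul ((Real.continuous_exp.comp
      (Continuous.neg (continuous_norm.pow 2))))).mul
      (continuous_norm.pow 2)).aestronglyMeasurable)
  · filter_upwards with z
    set t := ‖z‖ ^ 2 with ht
    have ht0 : 0 ≤ t := by positivity
    have key : t ≤ 2 * Real.exp (t / 2) := by
      have := Real.add_one_le_exp (t / 2)
      nlinarith [Real.exp_pos (t / 2)]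
    have hnorm : ‖Real.pi⁻¹ * Real.exp (-t) * t‖ = Real.pi⁻¹ * Real.exp (-t) * t := by
      rw [Real.norm_eq_abs, abs_of_nonneg]
      have := Real.pi_pos
      positivity
    rw [hnorm]
    have hexp : Real.exp (-t) * Real.exp (t / 2) = Real.exp (-(1/2 : ℝ) * t) := by
      rw [← Real.exp_add]; ring_nf
    have hpinv : (0:ℝ) < Real.pi⁻¹ := by simp [Real.pi_pos]
    calc Real.pi⁻¹ * Real.exp (-t) * t ≤ Real.pi⁻¹ * Real.exp (-t) * (2 * Real.exp (t / 2)) := by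
          apply mul_le_mul_of_nonneg_left key
          positivity
      _ = 2 * Real.pi⁻¹ * Real.exp (-(1/2 : ℝ) * t) := by rw [← hexp]; ring

/-- Type synonym for `ℂ` carrying the standard complex Gaussian as its volume. -/
def CG : Type := ℂ

instance : MeasurableSpace CG := inferInstanceAs (MeasurableSpace ℂ)

noncomputable instance : MeasureSpace CG where
  volume := (stdComplexGaussian : Measure ℂ)

instance : IsProbabilityMeasure (volume : Measure CG) :=
  inferInstanceAs (IsProbabilityMeasure stdComplexGaussian)

/-- The identity map `ℂ → CG`. -/
def toCG (z : ℂ) : CG := z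

lemma measurable_toCG : Measurable toCG := measurable_id

lemma prod_antitone {c : ℕ → ℝ} (h0 : ∀ k, 0 ≤ c k) (h1 : ∀ k, c k ≤ 1) :
    Antitone fun s : Finset ℕ => ∏ k ∈ s, c k := by
  intro s t hst
  dsimp only
  rw [← Finset.prod_sdiff hst]
  have h2 : ∏ k ∈ t \ s, c k ≤ 1 := Finset.prod_le_one (fun i _ => h0 i) (fun i _ => h1 i)
  have h3 : 0 ≤ ∏ k ∈ s, c k := Finset.prod_nonneg fun i _ => h0 i
  have h4 : 0 ≤ ∏ k ∈ t \ s, c k := Finset.prod_nonneg fun i _ => h0 i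
  nlinarith

/-- Let `(λ k)` be positive reals with `∑ 1/λ k < ∞` and `ν > 0`. Let `μ` be the product
on `ℂ^ℕ` (with the product σ-algebra) of standard complex Gaussians, characterized by its
values on cylinder sets. Then `𝒩(ω) = ∑ₖ |ωₖ|²/λₖ` converges `μ`-a.s., and
`∫ e^{-ν𝒩} dμ = ∏ₖ λₖ/(λₖ+ν)` (the integrand being interpreted as `0` where the sum
diverges). -/
theorem integral_exp_neg_nu_mass (lam : ℕ → ℝ) (hpos : ∀ k, 0 < lam k)
    (hsum : Summable fun k => 1 / lam k) (ν : ℝ) (hν : 0 < ν)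
    (μ : Measure (ℕ → ℂ)) [IsProbabilityMeasure μ]
    (hμ : ∀ (s : Finset ℕ) (A : ℕ → Set ℂ), (∀ k, MeasurableSet (A k)) →
      μ {ω | ∀ k ∈ s, ω k ∈ A k} = ∏ k ∈ s, stdComplexGaussian (A k)) :
    (∀ᵐ ω ∂μ, Summable fun k => ‖ω k‖ ^ 2 / lam k) ∧
    (∫ ω, (if Summable (fun k => ‖ω k‖ ^ 2 / lam k)
        then Real.exp (-ν * ∑' k, ‖ω k‖ ^ 2 / lam k) else 0) ∂μ)
      = ∏' k, lam k / (lam k + ν) := by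
  have habs_meas : Measurable fun z : ℂ => ‖z‖ ^ 2 :=
    (continuous_norm.pow 2).measurable
  have hmeas_abs : ∀ k : ℕ, Measurable fun ω : ℕ → ℂ => ‖ω k‖ ^ 2 :=
    fun k => habs_meas.comp (measurable_pi_apply k)
  have hnonneg : ∀ (ω : ℕ → ℂ) (k : ℕ), 0 ≤ ‖ω k‖ ^ 2 / lam k :=
    fun ω k => div_nonneg (by positivity) (hpos k).le
  -- the one-coordinate pushforward
  have hmap_eval : ∀ k : ℕ, μ.map (fun ω : ℕ → ℂ => ω k) = stdComplexGaussian := by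
    intro k
    ext A hA
    rw [Measure.map_apply (measurable_pi_apply k) hA]
    have := hμ {k} (fun _ => A) (fun _ => hA)
    simpa [Set.preimage] using this
  -- Part 1: a.s. summability
  set C := ∫⁻ z, ENNReal.ofReal (‖z‖ ^ 2) ∂stdComplexGaussian with hC
  have hClt : C < ⊤ := stdGauss_secondMoment_lt_top
  have hmomk : ∀ k, ∫⁻ ω, ENNReal.ofReal (‖ω k‖ ^ 2) ∂μ = C := by
    intro k
    rw [hC, ← hmap_eval k,
      lintegral_map habs_meas.ennreal_ofReal (measurable_pi_apply k)]
  have hGmeas : ∀ k, Measurable fun ω : ℕ → ℂ =>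
      ENNReal.ofReal (‖ω k‖ ^ 2 / lam k) :=
    fun k => ((hmeas_abs k).div_const _).ennreal_ofReal
  have hlint : ∫⁻ ω, ∑' k, ENNReal.ofReal (‖ω k‖ ^ 2 / lam k) ∂μ < ⊤ := by
    rw [lintegral_tsum fun k => (hGmeas k).aemeasurable]
    have hterm : ∀ k, ∫⁻ ω, ENNReal.ofReal (‖ω k‖ ^ 2 / lam k) ∂μ
        = C * ENNReal.ofReal (1 / lam k) := by
      intro k
      have hsplit : ∀ ω : ℕ → ℂ, ENNReal.ofReal (‖ω k‖ ^ 2 / lam k)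
          = ENNReal.ofReal (‖ω k‖ ^ 2) * ENNReal.ofReal (1 / lam k) := by
        intro ω
        rw [← ENNReal.ofReal_mul (by positivity)]
        congr 1
        field_simp
      simp_rw [hsplit]
      rw [lintegral_mul_const _ ((hmeas_abs k).ennreal_ofReal), hmomk k]
    simp_rw [hterm]
    rw [ENNReal.tsum_mul_left,
      ← ENNReal.ofReal_tsum_of_nonneg (fun k => div_nonneg zero_le_one (hpos k).le) hsum]
    exact ENNReal.mul_lt_top hClt ENNReal.ofReal_lt_top
  have hae : ∀ᵐ ω ∂μ, Summable fun k => ‖ω k‖ ^ 2 / lam k := by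
    have hfin := ae_lt_top (Measurable.ennreal_tsum hGmeas) hlint.ne
    filter_upwards [hfin] with ω hω
    have h2 : Summable fun k => (‖ω k‖ ^ 2 / lam k).toNNReal := by
      rw [← ENNReal.tsum_coe_ne_top_iff_summable]
      exact hω.ne
    refine (NNReal.summable_coe.mpr h2).congr fun k => ?_
    rw [Real.coe_toNNReal _ (hnonneg ω k)]
  refine ⟨hae, ?_⟩
  -- Part 2: the integral
  set f : (ℕ → ℂ) → ℝ := fun ω => if Summable (fun k => ‖ω k‖ ^ 2 / lam k)
      then Real.exp (-ν * ∑' k, ‖ω k‖ ^ 2 / lam k) else 0 with hf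
  set F : ℕ → (ℕ → ℂ) → ℝ := fun n ω =>
    Real.exp (-ν * ∑ k ∈ Finset.range n, ‖ω k‖ ^ 2 / lam k) with hF
  have hFmeas : ∀ n, Measurable (F n) := fun n =>
    Real.continuous_exp.measurable.comp (measurable_const.mul
      (Finset.measurable_sum _ fun k _ => (hmeas_abs k).div_const _))
  have hlimpt : ∀ ω, Tendsto (fun n => F n ω) atTop (𝓝 (f ω)) := by
    intro ω
    by_cases h : Summable fun k => ‖ω k‖ ^ 2 / lam k
    · rw [hf]
      simp only [if_pos h]
      exact (Real.continuous_exp.tendsto _).comp (h.hasSum.tendsto_sum_nat.const_mul (-ν))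
    · rw [hf]
      simp only [if_neg h]
      have hdiv : Tendsto (fun n => ∑ k ∈ Finset.range n, ‖ω k‖ ^ 2 / lam k)
          atTop atTop := (not_summable_iff_tendsto_nat_atTop_of_nonneg (hnonneg ω)).1 h
      have hbot : Tendsto (fun n => -ν * ∑ k ∈ Finset.range n, ‖ω k‖ ^ 2 / lam k)
          atTop atBot := (tendsto_const_mul_atBot_of_neg (by linarith)).2 hdiv
      exact Real.tendsto_exp_atBot.comp hbot
  have hInt : Tendsto (fun n => ∫ ω, F n ω ∂μ) atTop (𝓝 (∫ ω, f ω ∂μ)) := by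
    apply tendsto_integral_of_dominated_convergence (bound := fun _ => (1 : ℝ))
    · exact fun n => (hFmeas n).aestronglyMeasurable
    · exact integrable_const 1
    · intro n
      filter_upwards with ω
      rw [hF]
      dsimp only
      rw [Real.norm_eq_abs, abs_of_nonneg (Real.exp_pos _).le, ← Real.exp_zero]
      apply Real.exp_le_exp.2
      have hS : 0 ≤ ∑ k ∈ Finset.range n, ‖ω k‖ ^ 2 / lam k :=
        Finset.sum_nonneg fun k _ => hnonneg ω k
      nlinarith
    · filter_upwards with ω
      exact hlimpt ω
  -- product formula for ∫ F n
  set g : ℕ → ℂ → ℝ := fun k z => Real.exp (-(ν / lam k) * ‖z‖ ^ 2) with hg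
  have hgmeas : ∀ k, Measurable (g k) := fun k =>
    Real.continuous_exp.measurable.comp (measurable_const.mul habs_meas)
  have hgint : ∀ k, ∫ z : CG, g k z = lam k / (lam k + ν) := by
    intro k
    have h1 : ∫ z : CG, g k z = ∫ z, Real.exp (-(ν / lam k) * ‖z‖ ^ 2)
        ∂stdComplexGaussian := rfl
    rw [h1, stdGauss_integral (div_nonneg hν.le (hpos k).le)]
    have hlk := (hpos k).ne'
    rw [show (1 : ℝ) + ν / lam k = (lam k + ν) / lam k by field_simp, one_div_div]
  have hproj_meas : ∀ n : ℕ,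
      Measurable (fun (ω : ℕ → ℂ) (i : Fin n) => toCG (ω i)) :=
    fun n => measurable_pi_lambda _ fun i =>
      measurable_toCG.comp (measurable_pi_apply (i : ℕ))
  have hmap : ∀ n : ℕ, Measure.pi (fun _ : Fin n => (volume : Measure CG))
      = μ.map (fun (ω : ℕ → ℂ) (i : Fin n) => toCG (ω i)) := by
    intro n
    refine Measure.pi_eq fun s hs => ?_
    rw [Measure.map_apply (hproj_meas n) (MeasurableSet.univ_pi hs)]
    set A : ℕ → Set ℂ := fun k => if h : k < n then toCG ⁻¹' s ⟨k, h⟩ else Set.univ with hA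
    have hAmeas : ∀ k, MeasurableSet (A k) := by
      intro k
      rw [hA]
      dsimp only
      split
      · exact hs _
      · exact MeasurableSet.univ
    have hset : (fun (ω : ℕ → ℂ) (i : Fin n) => toCG (ω i)) ⁻¹' Set.pi Set.univ s
        = {ω : ℕ → ℂ | ∀ k ∈ Finset.range n, ω k ∈ A k} := by
      ext ω
      constructor
      · intro h k hk
        rw [Finset.mem_range] at hk
        rw [hA]
        dsimp only
        rw [dif_pos hk]
        exact h ⟨k, hk⟩ (Set.mem_univ _)
      · intro h i _
        have hi := h (i : ℕ) (Finset.mem_range.2 i.isLt)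
        rw [hA] at hi
        dsimp only at hi
        rw [dif_pos i.isLt] at hi
        exact hi
    rw [hset, hμ _ _ hAmeas,
      ← Fin.prod_univ_eq_prod_range (fun k => stdComplexGaussian (A k)) n]
    apply Finset.prod_congr rfl
    intro i _
    rw [hA]
    dsimp only
    rw [dif_pos i.isLt]
    rfl
  have hsm : ∀ (n : ℕ) (i : Fin n),
      Measurable fun x : Fin n → CG => g ↑i (x i) :=
    fun n i => (hgmeas ↑i).comp (measurable_pi_apply i)
  have hprod : ∀ n, ∫ ω, F n ω ∂μ = ∏ k ∈ Finset.range n, (lam k / (lam k + ν)) := by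
    intro n
    have h1 : ∀ ω : ℕ → ℂ, F n ω
        = (fun x : Fin n → CG => ∏ i : Fin n, g ↑i (x i))
          ((fun (ω : ℕ → ℂ) (i : Fin n) => toCG (ω i)) ω) := by
      intro ω
      rw [hF, hg]
      dsimp only
      rw [Finset.mul_sum, Real.exp_sum, ← Fin.prod_univ_eq_prod_range
        (fun k => Real.exp (-ν * (‖ω k‖ ^ 2 / lam k))) n]
      apply Finset.prod_congr rfl
      intro i _
      congr 1
      show -ν * (‖ω ↑i‖ ^ 2 / lam ↑i) = -(ν / lam ↑i) * ‖ω ↑i‖ ^ 2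
      have := (hpos (i : ℕ)).ne'
      field_simp
    calc ∫ ω, F n ω ∂μ
        = ∫ ω, (fun x : Fin n → CG => ∏ i : Fin n, g ↑i (x i))
            ((fun (ω : ℕ → ℂ) (i : Fin n) => toCG (ω i)) ω) ∂μ := by
          congr 1
          funext ω
          exact h1 ω
      _ = ∫ x : Fin n → CG, ∏ i : Fin n, g ↑i (x i)
            ∂(μ.map (fun (ω : ℕ → ℂ) (i : Fin n) => toCG (ω i))) := by
          rw [integral_map (hproj_meas n).aemeasurable
            (Measurable.aestronglyMeasurable
              (Finset.measurable_prod Finset.univ fun i _ => hsm n i))]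
      _ = ∫ x : Fin n → CG, ∏ i : Fin n, g ↑i (x i) := by
          rw [← hmap n, ← volume_pi]
      _ = ∏ i : Fin n, ∫ z : CG, g ↑i z :=
          MeasureTheory.integral_fintype_prod_eq_prod (E := fun _ : Fin n => CG) (fun i => g ↑i) (μ := fun _ => volume)
      _ = ∏ k ∈ Finset.range n, (lam k / (lam k + ν)) := by
          rw [← Fin.prod_univ_eq_prod_range (fun k => lam k / (lam k + ν)) n]
          exact Finset.prod_congr rfl fun i _ => hgint ↑i
  -- the product side
  set c : ℕ → ℝ := fun k => lam k / (lam k + ν) with hc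
  have hc0 : ∀ k, 0 < c k := fun k => div_pos (hpos k) (by linarith [hpos k])
  have hc1 : ∀ k, c k ≤ 1 := by
    intro k
    rw [hc]
    dsimp only
    rw [div_le_one (by linarith [hpos k])]
    linarith [hpos k]
  set P : Finset ℕ → ℝ := fun s => ∏ k ∈ s, c k with hP
  have hPnonneg : ∀ s, 0 ≤ P s := fun s => Finset.prod_nonneg fun i _ => (hc0 i).le
  have hPanti : Antitone P := prod_antitone (fun k => (hc0 k).le) hc1
  have hPbdd : BddBelow (Set.range P) := ⟨0, by rintro x ⟨s, rfl⟩; exact hPnonneg s⟩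
  have hPtend : Tendsto P atTop (𝓝 (⨅ s, P s)) := tendsto_atTop_ciInf hPanti hPbdd
  have hQbdd : BddBelow (Set.range fun n => P (Finset.range n)) :=
    ⟨0, by rintro x ⟨n, rfl⟩; exact hPnonneg _⟩
  have hQtend : Tendsto (fun n => P (Finset.range n)) atTop
      (𝓝 (⨅ n, P (Finset.range n))) :=
    tendsto_atTop_ciInf (fun m n h => hPanti (Finset.range_subset_range.2 h)) hQbdd
  have hiInf : (⨅ n, P (Finset.range n)) = ⨅ s, P s := by
    apply le_antisymm
    · apply le_ciInf
      intro s
      obtain ⟨N, hN⟩ := s.exists_nat_subset_range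
      exact ciInf_le_of_le hQbdd N (hPanti hN)
    · exact le_ciInf fun n => ciInf_le hPbdd _
  have htprod : ∏' k, c k = ⨅ s, P s := HasProd.tprod_eq hPtend
  have hItend : Tendsto (fun n => P (Finset.range n)) atTop (𝓝 (∫ ω, f ω ∂μ)) := by
    have heq : (fun n => P (Finset.range n)) = fun n => ∫ ω, F n ω ∂μ := by
      funext n
      rw [hprod n, hP]
    rw [heq]
    exact hInt
  rw [htprod, ← hiInf]
  exact tendsto_nhds_unique hItend hQtend
end

section
/- Let Ω = ℂ ∖ [0,∞), let I be a nonempty set, and let C > 0. For each n ∈ ℕ and ξ ∈ I let β_n^ξ : Ω → ℂ be analytic. Assume: (a) |β_n^ξ(ζ)| ≤ C/|Im ζ| for all n ∈ ℕ, ξ ∈ I and all ζ ∈ Ω with Im ζ ≠ 0; (b) for every ζ ∈ Ω with Re ζ < 0, sup_{ξ∈I} |β_n^ξ(ζ)| → 0 as n → ∞. Then for every ζ ∈ Ω, sup_{ξ∈I} |β_n^ξ(ζ)| → 0 as n → ∞. -/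
open Metric Complex Real

private lemma coeff_le' {f : ℂ → ℂ} {c : ℂ} {R M : ℝ} (hR : 0 < R)
    (hf : ContinuousOn f (Metric.closedBall c R))
    (hM : ∀ z ∈ Metric.sphere c R, ‖f z‖ ≤ M) (n : ℕ) :
    ‖cauchyPowerSeries f c R n‖ ≤ M / R ^ n := by
  have hcont : Continuous fun θ : ℝ => f (circleMap c R θ) :=
    (hf.mono Metric.sphere_subset_closedBall).comp_continuous (continuous_circleMap c R)
      (fun θ => circleMap_mem_sphere c hR.le θ)
  have hint : (∫ θ : ℝ in (0)..2 * π, ‖f (circleMap c R θ)‖) ≤ 2 * π * M := by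
    have := intervalIntegral.integral_mono_on (μ := MeasureTheory.volume)
      (f := fun θ : ℝ => ‖f (circleMap c R θ)‖) (g := fun _ : ℝ => M)
      Real.two_pi_pos.le (hcont.norm.intervalIntegrable 0 (2*π)) intervalIntegrable_const
      (fun θ _ => hM _ (circleMap_mem_sphere c hR.le θ))
    simpa using this
  calc ‖cauchyPowerSeries f c R n‖ ≤
      ((2 * π)⁻¹ * ∫ θ : ℝ in (0)..2 * π, ‖f (circleMap c R θ)‖) * |R|⁻¹ ^ n :=
        norm_cauchyPowerSeries_le f c R n
    _ ≤ ((2 * π)⁻¹ * (2 * π * M)) * |R|⁻¹ ^ n := by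
        gcongr
    _ = M / R ^ n := by
        rw [_root_.abs_of_nonneg hR.le]
        field_simp
        rw [one_div, inv_pow, inv_mul_cancel_right₀ (pow_ne_zero _ hR.ne')]

private lemma core' {f : ℂ → ℂ} {c : ℂ} {R ρ M E : ℝ} (hρ0 : 0 ≤ ρ) (hρR : ρ < R)
    (hf : DifferentiableOn ℂ f (Metric.closedBall c R))
    (hM : ∀ z ∈ Metric.closedBall c R, ‖f z‖ ≤ M) (K : ℕ)
    (hhead : ∀ k < K, ‖cauchyPowerSeries f c R k‖ * ρ ^ k ≤ E) :
    ∀ z ∈ Metric.closedBall c ρ, ‖f z‖ ≤ K * E + M * (ρ / R) ^ K / (1 - ρ / R) := by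
  intro z hz
  have hR : 0 < R := hρ0.trans_lt hρR
  set p := cauchyPowerSeries f c R with hp
  have hps : HasFPowerSeriesOnBall f p c (ENNReal.ofReal R) := by
    have h1 : HasFPowerSeriesOnBall f (cauchyPowerSeries f c R.toNNReal) c R.toNNReal := by
      refine DifferentiableOn.hasFPowerSeriesOnBall ?_ (by simpa using hR)
      rwa [Real.coe_toNNReal _ hR.le]
    rw [Real.coe_toNNReal _ hR.le] at h1
    rwa [ENNReal.ofReal, hp]
  set q : ℝ := ρ / R with hq
  have hq0 : 0 ≤ q := by positivity
  have hq1 : q < 1 := (div_lt_one hR).2 hρR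
  set y : ℂ := z - c with hy
  have hynorm : ‖y‖ ≤ ρ := by
    rw [hy, ← dist_eq_norm]; exact Metric.mem_closedBall.1 hz
  have hmem : y ∈ EMetric.ball (0 : ℂ) (ENNReal.ofReal R) := by
    show y ∈ Metric.eball 0 _
    rw [Metric.mem_eball, edist_dist, dist_zero_right]
    exact ENNReal.ofReal_lt_ofReal_iff_of_nonneg (norm_nonneg _) |>.2 (hynorm.trans_lt hρR)
  have hsum : HasSum (fun k => p k fun _ => y) (f z) := by
    have := hps.hasSum hmem
    simpa [hy] using this
  -- the majorant
  have hM0 : 0 ≤ M := (norm_nonneg _).trans (hM c (Metric.mem_closedBall_self hR.le))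
  set b : ℕ → ℝ := fun k => (if k < K then E - M * q ^ k else 0) + M * q ^ k with hb
  have hgb : ∀ k, ‖p k fun _ => y‖ ≤ b k := by
    intro k
    have h1 : ‖p k fun _ => y‖ ≤ ‖p k‖ * ρ ^ k := by
      refine (ContinuousMultilinearMap.le_opNorm _ _).trans ?_
      have h2 : (∏ _i : Fin k, ‖y‖) ≤ ρ ^ k := by
        simp only [Finset.prod_const, Finset.card_fin]
        exact pow_le_pow_left₀ (norm_nonneg _) hynorm k
      exact mul_le_mul_of_nonneg_left h2 (norm_nonneg _)
    by_cases hk : k < K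
    · simp only [hb, if_pos hk, sub_add_cancel]
      exact h1.trans (hhead k hk)
    · simp only [hb, if_neg hk, zero_add]
      have h2 : ‖p k‖ ≤ M / R ^ k :=
        coeff_le' hR hf.continuousOn (fun w hw => hM w (Metric.sphere_subset_closedBall hw)) k
      calc ‖p k fun _ => y‖ ≤ M / R ^ k * ρ ^ k := h1.trans (by gcongr)
        _ = M * q ^ k := by rw [hq, div_pow]; field_simp
  have hbsum : HasSum b ((∑ k ∈ Finset.range K, (E - M * q ^ k)) + M * (1 - q)⁻¹) := by
    refine HasSum.add ?_ ((hasSum_geometric_of_lt_one hq0 hq1).mul_left M)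
    have h := hasSum_sum_of_ne_finset_zero (s := Finset.range K) (L := SummationFilter.unconditional ℕ)
      (f := fun k => if k < K then E - M * q ^ k else 0)
      (fun k hk => if_neg (by simpa using hk))
    convert h using 1
    exact (Finset.sum_congr rfl fun k hk => by simp [Finset.mem_range.1 hk]).symm
  have hfz : ‖f z‖ ≤ (∑ k ∈ Finset.range K, (E - M * q ^ k)) + M * (1 - q)⁻¹ := by
    rw [← hsum.tsum_eq]
    exact tsum_of_norm_bounded hbsum hgb
  refine hfz.trans (le_of_eq ?_)
  have hsum_geom : (∑ k ∈ Finset.range K, q ^ k) = (q ^ K - 1) / (q - 1) :=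
    geom_sum_eq hq1.ne K
  rw [Finset.sum_sub_distrib, Finset.sum_const, Finset.card_range, ← Finset.mul_sum,
    hsum_geom]
  have h1q : (1 : ℝ) - q ≠ 0 := by linarith
  have hq1' : q - 1 ≠ 0 := sub_ne_zero.2 hq1.ne
  clear_value q
  field_simp
  ring

private lemma lemA' {f : ℂ → ℂ} {c : ℂ} {R r ρ M ε : ℝ} (hr : 0 < r) (hrρ : r ≤ ρ)
    (hρR : ρ < R) (hf : DifferentiableOn ℂ f (Metric.closedBall c R))
    (hM : ∀ z ∈ Metric.closedBall c R, ‖f z‖ ≤ M) (hε : 0 ≤ ε)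
    (hsmall : ∀ z ∈ Metric.closedBall c r, ‖f z‖ ≤ ε) (K : ℕ) :
    ∀ z ∈ Metric.closedBall c ρ,
      ‖f z‖ ≤ K * (ε * (ρ / r) ^ K) + M * (ρ / R) ^ K / (1 - ρ / R) := by
  have hρ0 : 0 ≤ ρ := hr.le.trans hrρ
  refine core' hρ0 hρR hf hM K ?_
  intro k hk
  -- the coefficients agree with those of the radius-r series
  have hfr : DifferentiableOn ℂ f (Metric.closedBall c r) :=
    hf.mono (Metric.closedBall_subset_closedBall (hrρ.trans hρR.le))
  have hpsR : HasFPowerSeriesOnBall f (cauchyPowerSeries f c R) c (ENNReal.ofReal R) := by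
    have hR : 0 < R := hρ0.trans_lt hρR
    have h1 : HasFPowerSeriesOnBall f (cauchyPowerSeries f c R.toNNReal) c R.toNNReal := by
      refine DifferentiableOn.hasFPowerSeriesOnBall ?_ (by simpa using hR)
      rwa [Real.coe_toNNReal _ hR.le]
    rw [Real.coe_toNNReal _ hR.le] at h1
    rwa [ENNReal.ofReal]
  have hpsr : HasFPowerSeriesOnBall f (cauchyPowerSeries f c r) c (ENNReal.ofReal r) := by
    have h1 : HasFPowerSeriesOnBall f (cauchyPowerSeries f c r.toNNReal) c r.toNNReal := by
      refine DifferentiableOn.hasFPowerSeriesOnBall ?_ (by simpa using hr)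
      rwa [Real.coe_toNNReal _ hr.le]
    rw [Real.coe_toNNReal _ hr.le] at h1
    rwa [ENNReal.ofReal]
  have heq : cauchyPowerSeries f c R = cauchyPowerSeries f c r :=
    hpsR.hasFPowerSeriesAt.eq_formalMultilinearSeries hpsr.hasFPowerSeriesAt
  have hcoef : ‖cauchyPowerSeries f c R k‖ ≤ ε / r ^ k := by
    rw [heq]
    exact coeff_le' hr hfr.continuousOn
      (fun w hw => hsmall w (Metric.sphere_subset_closedBall hw)) k
  calc ‖cauchyPowerSeries f c R k‖ * ρ ^ k ≤ (ε / r ^ k) * ρ ^ k :=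
        mul_le_mul_of_nonneg_right hcoef (by positivity)
    _ = ε * (ρ / r) ^ k := by rw [div_pow]; field_simp
    _ ≤ ε * (ρ / r) ^ K := by
        refine mul_le_mul_of_nonneg_left (pow_le_pow_right₀ ?_ hk.le) hε
        exact (one_le_div hr).2 hrρ

private lemma lemB' {f : ℂ → ℂ} {c : ℂ} {R δ M : ℝ} (hδ : 0 ≤ δ) (hδR : δ < R)
    (hf : DifferentiableOn ℂ f (Metric.closedBall c R))
    (hM : ∀ z ∈ Metric.closedBall c R, ‖f z‖ ≤ M) :
    ∀ z ∈ Metric.closedBall c δ, ‖f z‖ ≤ ‖f c‖ + M * (δ / R) / (1 - δ / R) := by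
  have hR : 0 < R := hδ.trans_lt hδR
  have hps : HasFPowerSeriesOnBall f (cauchyPowerSeries f c R) c (ENNReal.ofReal R) := by
    have h1 : HasFPowerSeriesOnBall f (cauchyPowerSeries f c R.toNNReal) c R.toNNReal := by
      refine DifferentiableOn.hasFPowerSeriesOnBall ?_ (by simpa using hR)
      rwa [Real.coe_toNNReal _ hR.le]
    rw [Real.coe_toNNReal _ hR.le] at h1
    rwa [ENNReal.ofReal]
  have h0 : ‖cauchyPowerSeries f c R 0‖ = ‖f c‖ := by
    rw [FormalMultilinearSeries.norm_apply_eq_norm_coef]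
    congr 1
    exact hps.coeff_zero 1
  have := core' (E := ‖f c‖) hδ hδR hf hM 1 (fun k hk => by
    interval_cases k
    simpa [h0] using le_rfl)
  intro z hz
  simpa [pow_one] using this z hz

set_option maxHeartbeats 1600000 in
/-- Let `Ω = ℂ ∖ [0,∞)`, `I` a nonempty set, `C > 0`. Let `β n ξ : Ω → ℂ` be analytic
(complex differentiable on the open connected set `Ω`), satisfying
(a) `|β n ξ ζ| ≤ C/|Im ζ|` whenever `Im ζ ≠ 0`;
(b) for every `ζ ∈ Ω` with `Re ζ < 0`, `sup_ξ |β n ξ ζ| → 0` as `n → ∞`.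
Then for every `ζ ∈ Ω`, `sup_ξ |β n ξ ζ| → 0` as `n → ∞`.
(Uniform-in-`ξ` convergence to `0` is expressed in ε-N form.) -/
theorem uniform_convergence_on_slit_plane {I : Type*} [Nonempty I] (C : ℝ) (hC : 0 < C)
    (β : ℕ → I → ℂ → ℂ)
    (hanal : ∀ n ξ, DifferentiableOn ℂ (β n ξ) {ζ : ℂ | ¬(ζ.im = 0 ∧ 0 ≤ ζ.re)})
    (hbound : ∀ n ξ (ζ : ℂ), ζ.im ≠ 0 → ‖β n ξ ζ‖ ≤ C / |ζ.im|)
    (hconv : ∀ ζ : ℂ, ¬(ζ.im = 0 ∧ 0 ≤ ζ.re) → ζ.re < 0 →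
      ∀ η : ℝ, 0 < η → ∃ N : ℕ, ∀ n ≥ N, ∀ ξ, ‖β n ξ ζ‖ ≤ η) :
    ∀ ζ : ℂ, ¬(ζ.im = 0 ∧ 0 ≤ ζ.re) →
      ∀ η : ℝ, 0 < η → ∃ N : ℕ, ∀ n ≥ N, ∀ ξ, ‖β n ξ ζ‖ ≤ η := by
  intro ζ hζ η hη
  by_cases hre : ζ.re < 0
  · exact hconv ζ hζ hre η hη
  have ht : ζ.im ≠ 0 := fun h => hζ ⟨h, not_lt.1 hre⟩
  set a : ℝ := |ζ.im| with ha
  have ha0 : 0 < a := abs_pos.2 ht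
  set M : ℝ := C / (a / 4) with hMdef
  have hM0 : 0 < M := by positivity
  -- region facts: on any ball of radius 3a/4 centered on the horizontal line through ζ,
  -- the functions are differentiable and bounded by M
  have him : ∀ w : ℂ, w.im = ζ.im → ∀ z ∈ Metric.closedBall w (3 * a / 4),
      a / 4 ≤ |z.im| := by
    intro w hw z hz
    have h1 : |z.im - w.im| ≤ dist z w := by
      rw [Complex.dist_eq]
      exact (Complex.abs_im_le_norm (z - w)).trans_eq' (by simp)
    have h2 : dist z w ≤ 3 * a / 4 := Metric.mem_closedBall.1 hz
    have h3 : a - |z.im| ≤ |z.im - ζ.im| := by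
      rw [ha]
      have := abs_sub_abs_le_abs_sub ζ.im z.im
      rw [abs_sub_comm] at this
      linarith
    rw [← hw] at h3
    linarith [h1.trans h2, h3]
  have hball : ∀ (n : ℕ) (ξ : I) (w : ℂ), w.im = ζ.im →
      DifferentiableOn ℂ (β n ξ) (Metric.closedBall w (3 * a / 4)) ∧
      ∀ z ∈ Metric.closedBall w (3 * a / 4), ‖β n ξ z‖ ≤ M := by
    intro n ξ w hw
    have hsub : Metric.closedBall w (3 * a / 4) ⊆ {ζ : ℂ | ¬(ζ.im = 0 ∧ 0 ≤ ζ.re)} := by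
      intro z hz
      have := him w hw z hz
      intro hcon
      rw [hcon.1] at this
      simp at this
      linarith
    refine ⟨(hanal n ξ).mono hsub, fun z hz => ?_⟩
    have h4 := him w hw z hz
    have hz0 : z.im ≠ 0 := by
      intro h; rw [h] at h4; simp at h4; linarith
    refine (hbound n ξ z hz0).trans ?_
    rw [hMdef]
    gcongr
  clear_value a M
  -- the chain of centers
  obtain ⟨m, hm⟩ := exists_nat_gt ((ζ.re + a) / (a / 4))
  have hm' : ζ.re + a < m * (a / 4) := by
    rw [div_lt_iff₀ (by positivity)] at hm
    linarith
  set c : ℕ → ℂ := fun j => ζ - ((((m : ℝ) - (j : ℝ)) * (a / 4) : ℝ) : ℂ) with hc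
  have hcim : ∀ j, (c j).im = ζ.im := by intro j; simp [hc]
  have hcm : c m = ζ := by simp [hc]
  have hcstep : ∀ j : ℕ, Metric.closedBall (c (j + 1)) (a / 4) ⊆
      Metric.closedBall (c j) (a / 2) := by
    intro j
    refine Metric.closedBall_subset_closedBall' ?_
    have hd : c (j + 1) - c j = ((a / 4 : ℝ) : ℂ) := by
      rw [hc]
      push_cast
      ring
    rw [Complex.dist_eq, hd]
    simp only [Complex.norm_real, Real.norm_eq_abs]
    rw [_root_.abs_of_nonneg (by positivity : (0:ℝ) ≤ a / 4)]
    linarith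
  have hc0re : ∀ z ∈ Metric.closedBall (c 0) (a / 8), z.re < 0 := by
    intro z hz
    have h1 : |z.re - (c 0).re| ≤ dist z (c 0) := by
      rw [Complex.dist_eq]
      exact (Complex.abs_re_le_norm (z - (c 0))).trans_eq' (by simp)
    have h2 : (c 0).re = ζ.re - m * (a / 4) := by simp [hc]
    have h3 := Metric.mem_closedBall.1 hz
    have h4 : |z.re - (c 0).re| ≤ a / 8 := h1.trans h3
    rw [abs_le] at h4
    rw [h2] at h4
    linarith [h4.2]
  -- main induction
  have P : ∀ j : ℕ, ∀ η' : ℝ, 0 < η' → ∃ N : ℕ, ∀ n ≥ N, ∀ ξ,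
      ∀ z ∈ Metric.closedBall (c j) (a / 4), ‖β n ξ z‖ ≤ η' := by
    intro j
    induction j with
    | zero =>
      intro η' hη'
      -- choose K to kill the tail (ratio 1/3)
      obtain ⟨K, hK⟩ := exists_pow_lt_of_lt_one (show (0:ℝ) < η' / (3 * M) by positivity)
        (show (1:ℝ)/3 < 1 by norm_num)
      set ε : ℝ := η' / (2 * ((K : ℝ) * 2 ^ K + 1)) with hεdef
      have hε0 : 0 < ε := by positivity
      -- smallness on closedBall (c 0) (a/8) via a finite net
      set δ : ℝ := min (a / 16) (ε * (a / 4) / (4 * M)) with hδdef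
      have hδ0 : 0 < δ := lt_min (by positivity) (by positivity)
      obtain ⟨t, ht1, ht2⟩ := (isCompact_closedBall (c 0) (a / 8)).elim_nhds_subcover
        (fun x => Metric.ball x δ) (fun x _ => Metric.ball_mem_nhds x hδ0)
      have key : ∀ x ∈ t, ∃ N, ∀ n ≥ N, ∀ ξ, ‖β n ξ x‖ ≤ ε / 2 := by
        intro x hx
        have hxs := ht1 x hx
        have hxim : x.im ≠ 0 := by
          have := him (c 0) (hcim 0) x (Metric.closedBall_subset_closedBall
            (by linarith) hxs)
          intro h; rw [h] at this; simp at this; linarith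
        exact hconv x (fun hcon => hxim hcon.1) (hc0re x hxs) (ε / 2) (by positivity)
      choose! g hg using key
      set N₀ : ℕ := t.sup g with hN0
      have hsmall : ∀ n ≥ N₀, ∀ ξ, ∀ z ∈ Metric.closedBall (c 0) (a / 8),
          ‖β n ξ z‖ ≤ ε := by
        intro n hn ξ z hz
        obtain ⟨x, hxt, hzx⟩ := Set.mem_iUnion₂.1 (ht2 hz)
        have hxs := ht1 x hxt
        -- apply the oscillation lemma at center x, radius a/4
        have hsub : Metric.closedBall x (a / 4) ⊆ Metric.closedBall (c 0) (3 * a / 4) := by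
          refine Metric.closedBall_subset_closedBall' ?_
          have := Metric.mem_closedBall.1 hxs
          linarith
        obtain ⟨hd, hb⟩ := hball n ξ (c 0) (hcim 0)
        have hδa : δ ≤ a / 16 := min_le_left _ _
        have hδε : δ ≤ ε * (a / 4) / (4 * M) := min_le_right _ _
        have hosc := lemB' (f := β n ξ) (c := x) (R := a / 4) (δ := δ) hδ0.le
          (by linarith) (hd.mono hsub) (fun w hw => hb w (hsub hw)) z
          (Metric.ball_subset_closedBall hzx)
        have harith : M * (δ / (a / 4)) / (1 - δ / (a / 4)) ≤ ε / 2 := by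
          have h1 : δ / (a / 4) ≤ 1 / 4 := by
            rw [div_le_div_iff₀ (by positivity) (by norm_num)]
            linarith
          have h2 : δ / (a / 4) ≤ ε / (4 * M) := by
            rw [div_le_div_iff₀ (by positivity) (by positivity)]
            exact (le_div_iff₀ (by positivity)).1 hδε
          have h3 : (0:ℝ) ≤ δ / (a / 4) := by positivity
          have h4 : (3:ℝ)/4 ≤ 1 - δ / (a / 4) := by linarith
          calc M * (δ / (a / 4)) / (1 - δ / (a / 4)) ≤ M * (δ / (a / 4)) / (3 / 4) := by
                gcongr
            _ ≤ M * (ε / (4 * M)) / (3 / 4) := by gcongr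
            _ = ε / 3 := by field_simp
            _ ≤ ε / 2 := by linarith
        have hgx := hg x hxt n (le_trans (Finset.le_sup hxt) hn) ξ
        calc ‖β n ξ z‖ ≤ ‖β n ξ x‖ + M * (δ / (a / 4)) / (1 - δ / (a / 4)) := hosc
          _ ≤ ε / 2 + ε / 2 := add_le_add hgx harith
          _ = ε := by ring
      refine ⟨N₀, fun n hn ξ z hz => ?_⟩
      obtain ⟨hd, hb⟩ := hball n ξ (c 0) (hcim 0)
      have hA := lemA' (f := β n ξ) (c := c 0) (R := 3 * a / 4) (r := a / 8) (ρ := a / 4)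
        (by positivity) (by linarith) (by linarith) hd hb hε0.le
        (hsmall n hn ξ) K z hz
      have hr1 : (a / 4) / (a / 8) = 2 := by field_simp; ring
      have hr2 : (a / 4) / (3 * a / 4) = 1 / 3 := by
        rw [div_eq_div_iff (by positivity) (by norm_num)]
        ring
      rw [hr1, hr2] at hA
      have htail : M * (1 / 3 : ℝ) ^ K / (1 - 1 / 3) ≤ η' / 2 := by
        have : M * (1 / 3 : ℝ) ^ K < M * (η' / (3 * M)) :=
          mul_lt_mul_of_pos_left hK hM0
        have hMη : M * (η' / (3 * M)) = η' / 3 := by field_simp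
        rw [hMη] at this
        rw [show (1:ℝ) - 1/3 = 2/3 by norm_num]
        rw [div_le_iff₀ (by norm_num)]
        nlinarith
      have hhead : (K : ℝ) * (ε * 2 ^ K) ≤ η' / 2 := by
        calc (K : ℝ) * (ε * 2 ^ K)
            = η' * (((K : ℝ) * 2 ^ K) / (2 * ((K : ℝ) * 2 ^ K + 1))) := by
              rw [hεdef]; ring
          _ ≤ η' * (1 / 2) := by
              refine mul_le_mul_of_nonneg_left ?_ hη'.le
              rw [div_le_div_iff₀ (by positivity) (by norm_num)]
              nlinarith [pow_pos (show (0:ℝ) < 2 by norm_num) K]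
          _ = η' / 2 := by ring
      linarith
    | succ j ih =>
      intro η' hη'
      obtain ⟨K, hK⟩ := exists_pow_lt_of_lt_one (show (0:ℝ) < η' / (6 * M) by positivity)
        (show (2:ℝ)/3 < 1 by norm_num)
      set ε : ℝ := η' / (2 * ((K : ℝ) * 2 ^ K + 1)) with hεdef
      have hε0 : 0 < ε := by positivity
      obtain ⟨N, hN⟩ := ih ε hε0
      refine ⟨N, fun n hn ξ z hz => ?_⟩
      obtain ⟨hd, hb⟩ := hball n ξ (c j) (hcim j)
      have hA := lemA' (f := β n ξ) (c := c j) (R := 3 * a / 4) (r := a / 4) (ρ := a / 2)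
        (by positivity) (by linarith) (by linarith) hd hb hε0.le
        (hN n hn ξ) K z (hcstep j hz)
      have hr1 : (a / 2) / (a / 4) = 2 := by field_simp; ring
      have hr2 : (a / 2) / (3 * a / 4) = 2 / 3 := by
        rw [div_eq_div_iff (by positivity) (by norm_num)]
        ring
      rw [hr1, hr2] at hA
      have htail : M * (2 / 3 : ℝ) ^ K / (1 - 2 / 3) ≤ η' / 2 := by
        have : M * (2 / 3 : ℝ) ^ K < M * (η' / (6 * M)) :=
          mul_lt_mul_of_pos_left hK hM0
        have hMη : M * (η' / (6 * M)) = η' / 6 := by field_simp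
        rw [hMη] at this
        rw [show (1:ℝ) - 2/3 = 1/3 by norm_num]
        rw [div_le_iff₀ (by norm_num)]
        nlinarith
      have hhead : (K : ℝ) * (ε * 2 ^ K) ≤ η' / 2 := by
        calc (K : ℝ) * (ε * 2 ^ K)
            = η' * (((K : ℝ) * 2 ^ K) / (2 * ((K : ℝ) * 2 ^ K + 1))) := by
              rw [hεdef]; ring
          _ ≤ η' * (1 / 2) := by
              refine mul_le_mul_of_nonneg_left ?_ hη'.le
              rw [div_le_div_iff₀ (by positivity) (by norm_num)]
              nlinarith [pow_pos (show (0:ℝ) < 2 by norm_num) K]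
          _ = η' / 2 := by ring
      linarith
  obtain ⟨N, hN⟩ := P m η hη
  refine ⟨N, fun n hn ξ => ?_⟩
  refine hN n hn ξ ζ ?_
  rw [← hcm] at *
  exact Metric.mem_closedBall_self (by positivity)
end
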